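/- Soundness of the RG-Iter rule: assume ⊥ has no program transitions and every program transition changes the program component. If Σ ⊨ S sat [inv ∩ b, rely, guar, inv], inv ∩ bᶜ ⊆ post, Id ⊆ guar, stable(inv, rely) and stable(post, rely), then the iteration is valid: Σ ⊨ b ⊚ S sat [inv, rely, guar, post]. -/

import Mathlib

namespace PiCore

/-- Event systems of the PiCore event specification language. -/
inductive EventSys (Lbl Prog St : Type) : Type where
  | basic (ev : Set (Lbl × Set St × Prog))
  | atom (ev : Set (Lbl × Set St × Prog))
  | trig (P : Prog)
  | seq (S1 S2 : EventSys Lbl Prog St)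
  | choice (S1 S2 : EventSys Lbl Prog St)
  | join (S1 S2 : EventSys Lbl Prog St)
  | iter (b : Set St) (S : EventSys Lbl Prog St)

/-- Transition kinds of event systems: anonymous τ, event entry, atomic event entry. -/
inductive TranKind (Lbl : Type) : Type where
  | tau
  | evt (l : Lbl)
  | aevt (l : Lbl)

variable {Lbl Prog St Env : Type} (K : Type)
variable (ptran : Env → Prog × St → Prog × St → Prop) (bot : Prog)

/-- Labelled small-step semantics of event systems. -/
inductive esStep (Γ : Env) :
    EventSys Lbl Prog St × St → TranKind Lbl × K → EventSys Lbl Prog St × St → Prop where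
  | basicEvt {ev : Set (Lbl × Set St × Prog)} {l g P s κ}
      (h1 : (l, g, P) ∈ ev) (h2 : s ∈ g) :
      esStep Γ (.basic ev, s) (.evt l, κ) (.trig P, s)
  | atomEvt {ev : Set (Lbl × Set St × Prog)} {l g P s t κ}
      (h1 : (l, g, P) ∈ ev) (h2 : s ∈ g)
      (h3 : Relation.ReflTransGen (fun c c' => ptran Γ c c') (P, s) (bot, t)) :
      esStep Γ (.atom ev, s) (.aevt l, κ) (.trig bot, t)
  | trigEvt {P Q s t κ} (h : ptran Γ (P, s) (Q, t)) :
      esStep Γ (.trig P, s) (.tau, κ) (.trig Q, t)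
  | seqStep {S1 S1' S2 s t} {δ : TranKind Lbl × K}
      (h : esStep Γ (S1, s) δ (S1', t)) (hne : S1' ≠ .trig bot) :
      esStep Γ (.seq S1 S2, s) δ (.seq S1' S2, t)
  | seqFin {S1 S2 s t} {δ : TranKind Lbl × K}
      (h : esStep Γ (S1, s) δ (.trig bot, t)) :
      esStep Γ (.seq S1 S2, s) δ (S2, t)
  | choice1 {S1 S2 S1' s t} {δ : TranKind Lbl × K}
      (h : esStep Γ (S1, s) δ (S1', t)) :
      esStep Γ (.choice S1 S2, s) δ (S1', t)
  | choice2 {S1 S2 S2' s t} {δ : TranKind Lbl × K}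
      (h : esStep Γ (S2, s) δ (S2', t)) :
      esStep Γ (.choice S1 S2, s) δ (S2', t)
  | join1 {S1 S2 S1' s t} {δ : TranKind Lbl × K}
      (h : esStep Γ (S1, s) δ (S1', t)) :
      esStep Γ (.join S1 S2, s) δ (.join S1' S2, t)
  | join2 {S1 S2 S2' s t} {δ : TranKind Lbl × K}
      (h : esStep Γ (S2, s) δ (S2', t)) :
      esStep Γ (.join S1 S2, s) δ (.join S1 S2', t)
  | joinFin {s κ} :
      esStep Γ (.join (.trig bot) (.trig bot), s) (.tau, κ) (.trig bot, s)
  | iterT {b S s κ} (h : s ∈ b) (hne : S ≠ .trig bot) :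
      esStep Γ (.iter b S, s) (.tau, κ) (.seq S (.iter b S), s)
  | iterF {b S s κ} (h : s ∉ b) :
      esStep Γ (.iter b S, s) (.tau, κ) (.trig bot, s)

/-- Linear computations of event systems. -/
inductive cpts (Γ : Env) : List (EventSys Lbl Prog St × St) → Prop where
  | one {S s} : cpts Γ [(S, s)]
  | env {S s t cs} (h : cpts Γ ((S, t) :: cs)) : cpts Γ ((S, s) :: (S, t) :: cs)
  | act {S1 S2 s t cs} {δ : TranKind Lbl × K}
      (h1 : esStep K ptran bot Γ (S1, s) δ (S2, t))
      (h2 : cpts Γ ((S2, t) :: cs)) : cpts Γ ((S1, s) :: (S2, t) :: cs)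

/-- Sequential lifting of a computation. -/
def liftSeq (Q : EventSys Lbl Prog St) (c : List (EventSys Lbl Prog St × St)) :
    List (EventSys Lbl Prog St × St) :=
  c.map fun p => (.seq p.1 Q, p.2)

/-- Modular computations of event systems. -/
inductive cptsM (Γ : Env) : List (EventSys Lbl Prog St × St) → Prop where
  | one {S s} : cptsM Γ [(S, s)]
  | env {S s t cs} (h : cptsM Γ ((S, t) :: cs)) : cptsM Γ ((S, s) :: (S, t) :: cs)
  | trigEvt {P Q s t cs} (h : ptran Γ (P, s) (Q, t))
      (h2 : cptsM Γ ((.trig Q, t) :: cs)) :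
      cptsM Γ ((.trig P, s) :: (.trig Q, t) :: cs)
  | basicEvt {ev : Set (Lbl × Set St × Prog)} {l g P s cs}
      (h1 : (l, g, P) ∈ ev) (h2 : s ∈ g)
      (h3 : cptsM Γ ((.trig P, s) :: cs)) :
      cptsM Γ ((.basic ev, s) :: (.trig P, s) :: cs)
  | atomEvt {ev : Set (Lbl × Set St × Prog)} {l g P s t cs}
      (h1 : (l, g, P) ∈ ev) (h2 : s ∈ g)
      (h3 : Relation.ReflTransGen (fun c c' => ptran Γ c c') (P, s) (bot, t))
      (h4 : cptsM Γ ((.trig bot, t) :: cs)) :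
      cptsM Γ ((.atom ev, s) :: (.trig bot, t) :: cs)
  | seqStep {S1 S1' S2 s t cs} {δ : TranKind Lbl × K}
      (h : esStep K ptran bot Γ (S1, s) δ (S1', t)) (hne : S1' ≠ .trig bot)
      (h2 : cptsM Γ ((.seq S1' S2, t) :: cs)) :
      cptsM Γ ((.seq S1 S2, s) :: (.seq S1' S2, t) :: cs)
  | seqFin {S1 S2 s t cs} {δ : TranKind Lbl × K}
      (h : esStep K ptran bot Γ (S1, s) δ (.trig bot, t))
      (h2 : cptsM Γ ((S2, t) :: cs)) :
      cptsM Γ ((.seq S1 S2, s) :: (S2, t) :: cs)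
  | chc1 {S1 S2 S1' s t cs} {δ : TranKind Lbl × K}
      (h : esStep K ptran bot Γ (S1, s) δ (S1', t))
      (h2 : cptsM Γ ((S1', t) :: cs)) :
      cptsM Γ ((.choice S1 S2, s) :: (S1', t) :: cs)
  | chc2 {S1 S2 S2' s t cs} {δ : TranKind Lbl × K}
      (h : esStep K ptran bot Γ (S2, s) δ (S2', t))
      (h2 : cptsM Γ ((S2', t) :: cs)) :
      cptsM Γ ((.choice S1 S2, s) :: (S2', t) :: cs)
  | join1 {S1 S2 S1' s t cs} {δ : TranKind Lbl × K}
      (h : esStep K ptran bot Γ (S1, s) δ (S1', t))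
      (h2 : cptsM Γ ((.join S1' S2, t) :: cs)) :
      cptsM Γ ((.join S1 S2, s) :: (.join S1' S2, t) :: cs)
  | join2 {S1 S2 S2' s t cs} {δ : TranKind Lbl × K}
      (h : esStep K ptran bot Γ (S2, s) δ (S2', t))
      (h2 : cptsM Γ ((.join S1 S2', t) :: cs)) :
      cptsM Γ ((.join S1 S2, s) :: (.join S1 S2', t) :: cs)
  | joinFin {s cs} (h : cptsM Γ ((.trig bot, s) :: cs)) :
      cptsM Γ ((.join (.trig bot) (.trig bot), s) :: (.trig bot, s) :: cs)
  | iterF {b S s cs} (h : s ∉ b) (h2 : cptsM Γ ((.trig bot, s) :: cs)) :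
      cptsM Γ ((.iter b S, s) :: (.trig bot, s) :: cs)
  | iterTOne {b S s cs} (h : s ∈ b) (h2 : cptsM Γ ((S, s) :: cs)) :
      cptsM Γ ((.iter b S, s) :: liftSeq (.iter b S) ((S, s) :: cs))
  | iterTMore {b S s t cs cs'} {δ : TranKind Lbl × K}
      (h : s ∈ b) (h2 : cptsM Γ ((S, s) :: cs))
      (h3 : esStep K ptran bot Γ (((S, s) :: cs).getLast (List.cons_ne_nil _ _)) δ
              (.trig bot, t))
      (h4 : cptsM Γ ((.iter b S, t) :: cs')) :
      cptsM Γ ((.iter b S, s) ::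
        (liftSeq (.iter b S) ((S, s) :: cs) ++ (.iter b S, t) :: cs'))


section RG

variable (Γ : Env)

/-- The assumption function: the initial state is in `pre` and every environment
step (consecutive configurations with identical event systems) satisfies `rely`. -/
def Assume (pre : Set St) (rely : Set (St × St)) :
    Set (List (EventSys Lbl Prog St × St)) :=
  {cl | (∀ c ∈ cl.head?, c.2 ∈ pre) ∧
    ∀ i : ℕ, (h : i + 1 < cl.length) →
      (cl.get ⟨i, Nat.lt_of_succ_lt h⟩).1 = (cl.get ⟨i + 1, h⟩).1 →
      ((cl.get ⟨i, Nat.lt_of_succ_lt h⟩).2, (cl.get ⟨i + 1, h⟩).2) ∈ rely}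

/-- The commitment function: every component step (consecutive configurations
related by a labelled event-system transition) satisfies `guar`, and the final
state is in `post` whenever the final event system is the terminated event ⟨⊥⟩. -/
def Commit (guar : Set (St × St)) (post : Set St) :
    Set (List (EventSys Lbl Prog St × St)) :=
  {cl | (∀ i : ℕ, (h : i + 1 < cl.length) →
      (∃ δ : TranKind Lbl × K,
        esStep K ptran bot Γ (cl.get ⟨i, Nat.lt_of_succ_lt h⟩) δ (cl.get ⟨i + 1, h⟩)) →
      ((cl.get ⟨i, Nat.lt_of_succ_lt h⟩).2, (cl.get ⟨i + 1, h⟩).2) ∈ guar) ∧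
    (∀ c ∈ cl.getLast?, c.1 = EventSys.trig bot → c.2 ∈ post)}

/-- Computations of an event system `S` starting from the initial state `s`. -/
def cptsFrom (S : EventSys Lbl Prog St) (s : St) :
    Set (List (EventSys Lbl Prog St × St)) :=
  {cl | cpts K ptran bot Γ cl ∧ cl.head? = some (S, s)}

/-- Validity of a rely-guarantee specification for an event system:
`Σ ⊨ ES sat [pre, rely, guar, post]`. -/
def esValid (S : EventSys Lbl Prog St)
    (pre : Set St) (rely guar : Set (St × St)) (post : Set St) : Prop :=
  ∀ s : St, cptsFrom K ptran bot Γ S s ∩ Assume pre rely ⊆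
    Commit K ptran bot Γ guar post

/-- Program computations. -/
inductive pcpts : List (Prog × St) → Prop where
  | one {P s} : pcpts [(P, s)]
  | env {P s t cs} (h : pcpts ((P, t) :: cs)) : pcpts ((P, s) :: (P, t) :: cs)
  | step {P Q s t cs} (h : ptran Γ (P, s) (Q, t))
      (h2 : pcpts ((Q, t) :: cs)) : pcpts ((P, s) :: (Q, t) :: cs)

/-- The assumption function at the program level. -/
def pAssume (pre : Set St) (rely : Set (St × St)) : Set (List (Prog × St)) :=
  {cl | (∀ c ∈ cl.head?, c.2 ∈ pre) ∧
    ∀ i : ℕ, (h : i + 1 < cl.length) →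
      (cl.get ⟨i, Nat.lt_of_succ_lt h⟩).1 = (cl.get ⟨i + 1, h⟩).1 →
      ((cl.get ⟨i, Nat.lt_of_succ_lt h⟩).2, (cl.get ⟨i + 1, h⟩).2) ∈ rely}

/-- The commitment function at the program level, with termination at ⊥. -/
def pCommit (guar : Set (St × St)) (post : Set St) : Set (List (Prog × St)) :=
  {cl | (∀ i : ℕ, (h : i + 1 < cl.length) →
      ptran Γ (cl.get ⟨i, Nat.lt_of_succ_lt h⟩) (cl.get ⟨i + 1, h⟩) →
      ((cl.get ⟨i, Nat.lt_of_succ_lt h⟩).2, (cl.get ⟨i + 1, h⟩).2) ∈ guar) ∧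
    (∀ c ∈ cl.getLast?, c.1 = bot → c.2 ∈ post)}

/-- Program-level validity: `Σ ⊨p P sat [pre, rely, guar, post]`. -/
def pValid (P : Prog) (pre : Set St) (rely guar : Set (St × St)) (post : Set St) :
    Prop :=
  ∀ s : St,
    {cl : List (Prog × St) | pcpts ptran Γ cl ∧ cl.head? = some (P, s)} ∩
      pAssume pre rely ⊆ pCommit ptran bot Γ guar post

end RG

/-- `stable f g`: the set `f` is stable under the relation `g`. -/
def stable {St : Type} (f : Set St) (g : Set (St × St)) : Prop :=
  ∀ x y : St, x ∈ f → (x, y) ∈ g → y ∈ f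

/-- The identity relation on states. -/
def IdRel (St : Type) : Set (St × St) := {p | p.1 = p.2}

end PiCore

namespace PiCore
namespace Aux

variable {Lbl Prog St Env : Type} {K : Type}
variable {ptran : Env → Prog × St → Prog × St → Prop} {bot : Prog} {Γ : Env}

/-- Size of an event system. -/
def sz : EventSys Lbl Prog St → ℕ
  | .basic _ => 1
  | .atom _ => 1
  | .trig _ => 1
  | .seq a c => sz a + sz c + 1
  | .choice a c => sz a + sz c + 1
  | .join a c => sz a + sz c + 1
  | .iter _ c => sz c + 1

/-- If a step produces a choice-headed event system, the size strictly decreases. -/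
lemma step_choice_size {c c' : EventSys Lbl Prog St × St} {δ : TranKind Lbl × K}
    (h : esStep K ptran bot Γ c δ c') :
    ∀ Y1 Y2 : EventSys Lbl Prog St, c'.1 = .choice Y1 Y2 → sz c'.1 < sz c.1 := by
  induction h with
  | basicEvt h1 h2 => intro _ _ h; simp at h
  | atomEvt h1 h2 h3 => intro _ _ h; simp at h
  | trigEvt h => intro _ _ h; simp at h
  | seqStep h hne ih => intro _ _ h; simp at h
  | seqFin h => intro Y1 Y2 h; simp only [sz]; omega
  | choice1 h ih =>
      intro Y1 Y2 h'
      have := ih Y1 Y2 h'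
      simp only [sz] at *; omega
  | choice2 h ih =>
      intro Y1 Y2 h'
      have := ih Y1 Y2 h'
      simp only [sz] at *; omega
  | join1 h ih => intro _ _ h; simp at h
  | join2 h ih => intro _ _ h; simp at h
  | joinFin => intro _ _ h; simp at h
  | iterT h hne => intro _ _ h; simp at h
  | iterF h => intro _ _ h; simp at h

/-- A step never preserves the event system. -/
lemma step_ne (hneq : ∀ (Γ : Env) (P : Prog) (s t : St), ¬ ptran Γ (P, s) (P, t))
    {c c' : EventSys Lbl Prog St × St} {δ : TranKind Lbl × K}
    (h : esStep K ptran bot Γ c δ c') : c.1 ≠ c'.1 := by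
  induction h with
  | basicEvt h1 h2 => simp
  | atomEvt h1 h2 h3 => simp
  | trigEvt h =>
      simp only [ne_eq, EventSys.trig.injEq]
      rintro rfl; exact hneq _ _ _ _ h
  | seqStep h hne ih =>
      simp only [ne_eq, EventSys.seq.injEq]
      rintro ⟨h', -⟩; exact ih h'
  | seqFin h =>
      intro he
      have := congrArg sz he
      simp only [sz] at this; omega
  | choice1 h ih =>
      intro he
      have := step_choice_size h _ _ he.symm
      rw [← he] at this
      simp only [sz] at this; omega
  | choice2 h ih =>
      intro he
      have := step_choice_size h _ _ he.symm
      rw [← he] at this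
      simp only [sz] at this; omega
  | join1 h ih =>
      simp only [ne_eq, EventSys.join.injEq]
      rintro ⟨h', -⟩; exact ih h'
  | join2 h ih =>
      simp only [ne_eq, EventSys.join.injEq]
      rintro ⟨-, h'⟩; exact ih h'
  | joinFin => simp
  | iterT h hne => simp
  | iterF h => simp

/-- No step is possible from the terminated event `⟨⊥⟩`. -/
lemma bot_no_step (hbot : ∀ (Γ : Env) (s : St) (c : Prog × St), ¬ ptran Γ (bot, s) c)
    {c c' : EventSys Lbl Prog St × St} {δ : TranKind Lbl × K}
    (h : esStep K ptran bot Γ c δ c') (hc : c.1 = .trig bot) : False := by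
  induction h <;> simp_all

/-- Appending a final component step to a computation. -/
lemma cpts_snoc {cl : List (EventSys Lbl Prog St × St)} {p q : EventSys Lbl Prog St × St}
    {δ : TranKind Lbl × K}
    (h : cpts K ptran bot Γ cl) (hl : cl.getLast? = some p)
    (hs : esStep K ptran bot Γ p δ q) : cpts K ptran bot Γ (cl ++ [q]) := by
  induction h with
  | @one S s =>
      simp at hl
      obtain ⟨q1, q2⟩ := q
      subst hl
      exact .act hs .one
  | env h ih =>
      rw [List.getLast?_cons_cons] at hl
      exact .env (ih hl)
  | act h1 h2 ih =>
      rw [List.getLast?_cons_cons] at hl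
      exact .act h1 (ih hl)

/-- Auxiliary: `getLast?` of a cons with nonempty tail. -/
lemma getLast?_cons' {α : Type*} {a : α} {l : List α} (h : l ≠ []) :
    (a :: l).getLast? = l.getLast? := by
  cases l with
  | nil => exact absurd rfl h
  | cons b l' => exact List.getLast?_cons_cons

lemma ne_nil_of_head? {α : Type*} {l : List α} {a : α} (h : l.head? = some a) : l ≠ [] := by
  intro hn; subst hn; simp at h

/-- Prepending an environment step to a computation. -/
lemma cpts_cons_env {cl : List (EventSys Lbl Prog St × St)} {S : EventSys Lbl Prog St} {t s : St}
    (h : cpts K ptran bot Γ cl) (hh : cl.head? = some (S, t)) :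
    cpts K ptran bot Γ ((S, s) :: cl) := by
  cases cl with
  | nil => simp at hh
  | cons a l =>
      have : a = (S, t) := by simpa using hh
      subst this
      exact .env h

/-- Prepending a component step to a computation. -/
lemma cpts_cons_act {cl : List (EventSys Lbl Prog St × St)}
    {S1 S2 : EventSys Lbl Prog St} {s t : St} {δ : TranKind Lbl × K}
    (h : cpts K ptran bot Γ cl) (hh : cl.head? = some (S2, t))
    (hs : esStep K ptran bot Γ (S1, s) δ (S2, t)) :
    cpts K ptran bot Γ ((S1, s) :: cl) := by
  cases cl with
  | nil => simp at hh
  | cons a l =>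
      have : a = (S2, t) := by simpa using hh
      subst this
      exact .act hs h

/-- Every configuration of a computation from `⟨⊥⟩` is at `⟨⊥⟩`. -/
lemma trig_bot_all (hbot : ∀ (Γ : Env) (s : St) (c : Prog × St), ¬ ptran Γ (bot, s) c)
    {cl : List (EventSys Lbl Prog St × St)}
    (h : cpts K ptran bot Γ cl) :
    ∀ u, cl.head? = some (.trig bot, u) → ∀ p ∈ cl, p.1 = .trig bot := by
  induction h with
  | one =>
      intro u hh p hp
      simp only [List.head?_cons, Option.some.injEq, Prod.mk.injEq] at hh
      obtain ⟨rfl, rfl⟩ := hh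
      simp only [List.mem_singleton] at hp
      subst hp
      rfl
  | env h ih =>
      intro u hh p hp
      simp only [List.head?_cons, Option.some.injEq, Prod.mk.injEq] at hh
      obtain ⟨rfl, rfl⟩ := hh
      rcases List.mem_cons.mp hp with rfl | hp'
      · rfl
      · exact ih _ rfl p hp'
  | act h1 h2 ih =>
      intro u hh p hp
      simp only [List.head?_cons, Option.some.injEq, Prod.mk.injEq] at hh
      obtain ⟨rfl, rfl⟩ := hh
      exact (bot_no_step hbot h1 rfl).elim

/-- Decomposition of a computation of `S1 ▷ I`. -/
lemma seq_decomp {I : EventSys Lbl Prog St} :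
    ∀ {cl : List (EventSys Lbl Prog St × St)}, cpts K ptran bot Γ cl →
    ∀ {S1 : EventSys Lbl Prog St} {s : St}, cl.head? = some (.seq S1 I, s) →
    ∃ cl1, cpts K ptran bot Γ cl1 ∧ cl1.head? = some (S1, s) ∧
      (cl = liftSeq I cl1 ∨
        ∃ (t : St) (cl2 : List (EventSys Lbl Prog St × St)) (δ : TranKind Lbl × K)
          (p : EventSys Lbl Prog St × St), cl1.getLast? = some p ∧
          esStep K ptran bot Γ p δ (.trig bot, t) ∧
          cpts K ptran bot Γ cl2 ∧ cl2.head? = some (I, t) ∧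
          cl = liftSeq I cl1 ++ cl2) := by
  intro cl h
  induction h with
  | one =>
      intro S1 s hh
      simp only [List.head?_cons, Option.some.injEq, Prod.mk.injEq] at hh
      obtain ⟨he1, he2⟩ := hh
      subst he1
      have he2' := he2.symm
      subst he2'
      exact ⟨[(S1, s)], .one, rfl, .inl (by simp [liftSeq])⟩
  | env h ih =>
      intro S1 s hh
      simp only [List.head?_cons, Option.some.injEq, Prod.mk.injEq] at hh
      obtain ⟨he1, he2⟩ := hh
      subst he1
      have he2' := he2.symm
      subst he2'
      obtain ⟨cl1, hc1, hh1, hcase⟩ := ih rfl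
      refine ⟨(S1, s) :: cl1, cpts_cons_env hc1 hh1, rfl, ?_⟩
      rcases hcase with heq | ⟨t2, cl2, δ, p, hp, hps, hc2, hh2, heq⟩
      · exact .inl (by simp only [liftSeq] at heq ⊢; rw [List.map_cons, ← heq])
      · refine .inr ⟨t2, cl2, δ, p, ?_, hps, hc2, hh2, ?_⟩
        · rwa [getLast?_cons' (ne_nil_of_head? hh1)]
        · simp only [liftSeq] at heq ⊢; rw [List.map_cons, List.cons_append, ← heq]
  | act h1 h2 ih =>
      intro S1 s hh
      simp only [List.head?_cons, Option.some.injEq, Prod.mk.injEq] at hh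
      obtain ⟨he1, he2⟩ := hh
      subst he1
      have he2' := he2.symm
      subst he2'
      cases h1 with
      | seqStep hin hne =>
          obtain ⟨cl1, hc1, hh1, hcase⟩ := ih rfl
          refine ⟨(S1, s) :: cl1, cpts_cons_act hc1 hh1 hin, rfl, ?_⟩
          rcases hcase with heq | ⟨t2, cl2, δ, p, hp, hps, hc2, hh2, heq⟩
          · exact .inl (by simp only [liftSeq] at heq ⊢; rw [List.map_cons, ← heq])
          · refine .inr ⟨t2, cl2, δ, p, ?_, hps, hc2, hh2, ?_⟩
            · rwa [getLast?_cons' (ne_nil_of_head? hh1)]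
            · simp only [liftSeq] at heq ⊢; rw [List.map_cons, List.cons_append, ← heq]
      | seqFin hin =>
          exact ⟨[(S1, _)], .one, rfl,
            .inr ⟨_, _, _, (S1, _), rfl, hin, h2, rfl, by simp [liftSeq]⟩⟩

/-- Environment-step condition as a binary relation on configurations. -/
def envR (rely : Set (St × St)) (c c' : EventSys Lbl Prog St × St) : Prop :=
  c.1 = c'.1 → (c.2, c'.2) ∈ rely

/-- Component-step condition as a binary relation on configurations. -/
def guarR (guar : Set (St × St)) (c c' : EventSys Lbl Prog St × St) : Prop :=
  (∃ δ : TranKind Lbl × K, esStep K ptran bot Γ c δ c') → (c.2, c'.2) ∈ guar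

lemma assume_iff {pre : Set St} {rely : Set (St × St)}
    {cl : List (EventSys Lbl Prog St × St)} :
    cl ∈ Assume pre rely ↔
      (∀ c ∈ cl.head?, c.2 ∈ pre) ∧ List.IsChain (envR rely) cl := by
  show ((∀ c ∈ cl.head?, c.2 ∈ pre) ∧ _) ↔ _
  constructor
  · rintro ⟨ha, hb⟩
    refine ⟨ha, List.isChain_iff_getElem.2 fun i hi => ?_⟩
    exact fun hE => hb i (by omega) hE
  · rintro ⟨ha, hb⟩
    refine ⟨ha, fun i hi hE => ?_⟩
    exact List.isChain_iff_getElem.1 hb i (by omega) hE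

lemma commit_iff {guar : Set (St × St)} {post : Set St}
    {cl : List (EventSys Lbl Prog St × St)} :
    cl ∈ Commit K ptran bot Γ guar post ↔
      List.IsChain (guarR (ptran := ptran) (bot := bot) (Γ := Γ) (K := K) guar) cl ∧
        ∀ c ∈ cl.getLast?, c.1 = .trig bot → c.2 ∈ post := by
  show (_ ∧ (∀ c ∈ cl.getLast?, c.1 = .trig bot → c.2 ∈ post)) ↔ _
  constructor
  · rintro ⟨ha, hb⟩
    refine ⟨List.isChain_iff_getElem.2 fun i hi => ?_, hb⟩
    exact fun hE => ha i (by omega) hE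
  · rintro ⟨ha, hb⟩
    refine ⟨fun i hi hE => ?_, hb⟩
    exact List.isChain_iff_getElem.1 ha i (by omega) hE

lemma chain_env_lift_down {rely : Set (St × St)} {I : EventSys Lbl Prog St}
    {cl1 : List (EventSys Lbl Prog St × St)}
    (h : List.IsChain (envR rely) (liftSeq I cl1)) : List.IsChain (envR rely) cl1 := by
  rw [liftSeq, List.isChain_map] at h
  refine h.imp fun a c hac he => ?_
  exact hac (by show EventSys.seq _ _ = EventSys.seq _ _; rw [he])

/-- Inversion of a lifted sequential step. -/
lemma seq_step_invert {X X' I : EventSys Lbl Prog St} {s t : St} {δ : TranKind Lbl × K}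
    (hs : esStep K ptran bot Γ (.seq X I, s) δ (.seq X' I, t)) :
    esStep K ptran bot Γ (X, s) δ (X', t) := by
  generalize hY : ((EventSys.seq X' I : EventSys Lbl Prog St), t) = c' at hs
  cases hs with
  | seqStep hin hne =>
      injection hY with hY1 hY2
      injection hY1 with hY1a hY1b
      subst hY1a; subst hY2
      exact hin
  | seqFin hin =>
      injection hY with hY1 hY2
      have := congrArg sz hY1
      simp only [sz] at this
      omega

lemma chain_guar_lift {guar : Set (St × St)} {I : EventSys Lbl Prog St}
    {cl1 : List (EventSys Lbl Prog St × St)}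
    (h : List.IsChain (guarR (ptran := ptran) (bot := bot) (Γ := Γ) (K := K) guar) cl1) :
    List.IsChain (guarR (ptran := ptran) (bot := bot) (Γ := Γ) (K := K) guar)
      (liftSeq I cl1) := by
  rw [liftSeq, List.isChain_map]
  refine h.imp fun a c hac hex => ?_
  obtain ⟨δ, hs⟩ := hex
  exact hac ⟨δ, seq_step_invert hs⟩

lemma trivial_guar (hbot : ∀ (Γ : Env) (s : St) (c : Prog × St), ¬ ptran Γ (bot, s) c)
    {guar : Set (St × St)} :
    ∀ {cl : List (EventSys Lbl Prog St × St)}, (∀ p ∈ cl, p.1 = .trig bot) →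
      List.IsChain (guarR (ptran := ptran) (bot := bot) (Γ := Γ) (K := K) guar) cl := by
  intro cl
  induction cl with
  | nil => intro _; simp
  | cons a l ih =>
      intro h
      cases l with
      | nil => simp
      | cons c l' =>
          rw [List.isChain_cons_cons]
          refine ⟨fun hex => ?_, ih fun p hp => h p (List.mem_cons_of_mem _ hp)⟩
          obtain ⟨δ, hs⟩ := hex
          exact (bot_no_step hbot hs (h a (List.mem_cons_self))).elim

lemma post_persist {rely : Set (St × St)} {post : Set St} (h5 : stable post rely) :
    ∀ (cl : List (EventSys Lbl Prog St × St)),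
      List.IsChain (envR rely) cl → (∀ p ∈ cl, p.1 = .trig bot) →
      ∀ u, cl.head? = some (.trig bot, u) → u ∈ post →
      ∀ q ∈ cl.getLast?, q.2 ∈ post := by
  intro cl
  induction cl with
  | nil => intro _ _ u h; simp at h
  | cons a l ih =>
      intro hch hall u hh hu q hq
      cases l with
      | nil =>
          simp only [List.getLast?_singleton, Option.mem_def, Option.some.injEq] at hq
          subst hq
          have ha : a = (.trig bot, u) := by simpa using hh
          rw [ha]
          exact hu
      | cons c l' =>
          rw [List.isChain_cons_cons] at hch
          have hc1 : c.1 = .trig bot := hall c (by simp)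
          have ha : a = (.trig bot, u) := by simpa using hh
          have hr : (u, c.2) ∈ rely := by
            have := hch.1 (by rw [ha, hc1])
            rw [ha] at this
            exact this
          refine ih hch.2 (fun p hp => hall p (List.mem_cons_of_mem _ hp)) c.2
            ?_ (h5 _ _ hu hr) q (by rwa [List.getLast?_cons_cons] at hq)
          rw [List.head?_cons, show c = (EventSys.trig bot, c.2) from Prod.ext hc1 rfl]

lemma iter_main
    (hbot : ∀ (Γ : Env) (s : St) (c : Prog × St), ¬ ptran Γ (bot, s) c)
    (hneq : ∀ (Γ : Env) (P : Prog) (s t : St), ¬ ptran Γ (P, s) (P, t))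
    {b : Set St} {S : EventSys Lbl Prog St} {inv : Set St} {rely guar : Set (St × St)}
    {post : Set St}
    (h1 : esValid K ptran bot Γ S (inv ∩ b) rely guar inv)
    (h2 : inv ∩ bᶜ ⊆ post)
    (h3 : IdRel St ⊆ guar)
    (h4 : stable inv rely)
    (h5 : stable post rely) :
    ∀ (n : ℕ) (cl : List (EventSys Lbl Prog St × St)), cl.length ≤ n →
      cpts K ptran bot Γ cl → ∀ s : St, cl.head? = some (.iter b S, s) → s ∈ inv →
      List.IsChain (envR rely) cl →
      List.IsChain (guarR (ptran := ptran) (bot := bot) (Γ := Γ) (K := K) guar) cl ∧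
        ∀ c ∈ cl.getLast?, c.1 = .trig bot → c.2 ∈ post := by
  intro n
  induction n with
  | zero =>
      intro cl hlen hc s hh
      cases cl with
      | nil => simp at hh
      | cons a l => simp at hlen
  | succ n IH =>
      intro cl hlen hc s hh hsinv henv
      cases hc with
      | one =>
          simp only [List.head?_cons, Option.some.injEq, Prod.mk.injEq] at hh
          obtain ⟨he1, he2⟩ := hh
          subst he1
          refine ⟨List.isChain_singleton _, ?_⟩
          intro c hc' hcb
          simp only [List.getLast?_singleton, Option.mem_def, Option.some.injEq] at hc'
          subst hc'
          simp at hcb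
      | env hk =>
          rename_i S0 s0 t cs
          simp only [List.head?_cons, Option.some.injEq, Prod.mk.injEq] at hh
          obtain ⟨he1, he2⟩ := hh
          subst he1
          have he2' := he2.symm
          subst he2'
          rw [List.isChain_cons_cons] at henv
          have hst : (s, t) ∈ rely := henv.1 rfl
          have htinv : t ∈ inv := h4 _ _ hsinv hst
          obtain ⟨hg, hl⟩ :=
            IH ((EventSys.iter b S, t) :: cs) (by simp at hlen ⊢; omega) hk t rfl htinv henv.2
          refine ⟨List.isChain_cons_cons.2 ⟨?_, hg⟩, ?_⟩
          · rintro ⟨δ, hs'⟩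
            exact (step_ne hneq hs' rfl).elim
          · rwa [List.getLast?_cons_cons]
      | act hstep hk =>
          rename_i S0 C2 s0 t cs δ0
          simp only [List.head?_cons, Option.some.injEq, Prod.mk.injEq] at hh
          obtain ⟨he1, he2⟩ := hh
          subst he1
          have he2' := he2.symm
          subst he2'
          rw [List.isChain_cons_cons] at henv
          cases hstep with
          | iterF hnb =>
              have hpost : s ∈ post := h2 ⟨hsinv, hnb⟩
              have hall := trig_bot_all hbot hk s rfl
              refine ⟨List.isChain_cons_cons.2 ⟨fun _ => h3 rfl, trivial_guar hbot hall⟩, ?_⟩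
              rw [List.getLast?_cons_cons]
              intro c hc' _
              exact post_persist h5 _ henv.2 hall s rfl hpost c hc'
          | iterT hb hne =>
              obtain ⟨cl1, hc1, hh1, hcase⟩ := seq_decomp hk rfl
              obtain ⟨⟩ | ⟨a1, cl1t⟩ := cl1
              · simp at hh1
              have ha1 : a1 = (S, s) := by simpa using hh1
              subst ha1
              rcases hcase with heq | ⟨t2, cl2, δ', p, hp, hps, hc2, hh2, heq⟩
              · -- the whole tail is a lifted computation of S
                have henv1 : List.IsChain (envR rely) ((S, s) :: cl1t) :=
                  chain_env_lift_down (heq ▸ henv.2)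
                have hcom := h1 s (a := (S, s) :: cl1t)
                  ⟨⟨hc1, rfl⟩, assume_iff.mpr
                    ⟨by intro c hc'; simp only [List.head?_cons, Option.mem_def,
                        Option.some.injEq] at hc'; subst hc'; exact ⟨hsinv, hb⟩, henv1⟩⟩
                obtain ⟨hg1, hl1⟩ := commit_iff.mp hcom
                refine ⟨List.isChain_cons_cons.2 ⟨fun _ => h3 rfl, heq ▸ chain_guar_lift hg1⟩, ?_⟩
                rw [List.getLast?_cons_cons, heq, liftSeq, List.getLast?_map]
                intro c hc' hcb
                simp only [Option.mem_def, Option.map_eq_some_iff] at hc'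
                obtain ⟨q, -, rfl⟩ := hc'
                simp at hcb
              · -- the lifted part finishes and the iteration restarts
                have henvsplit := heq ▸ henv.2
                rw [List.isChain_append] at henvsplit
                obtain ⟨hA, hB, hAB⟩ := henvsplit
                have henv1 : List.IsChain (envR rely) ((S, s) :: cl1t) := chain_env_lift_down hA
                have hc1' := cpts_snoc hc1 hp hps
                have henv1' : List.IsChain (envR rely) (((S, s) :: cl1t) ++ [(EventSys.trig bot, t2)]) := by
                  rw [List.isChain_append]
                  refine ⟨henv1, List.isChain_singleton _, ?_⟩
                  intro x hx y hy hxy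
                  rw [Option.mem_def, hp, Option.some.injEq] at hx
                  subst hx
                  simp only [List.head?_cons, Option.mem_def, Option.some.injEq] at hy
                  subst hy
                  exact (bot_no_step hbot hps hxy).elim
                have hcom := h1 s (a := ((S, s) :: cl1t) ++ [(EventSys.trig bot, t2)])
                  ⟨⟨hc1', rfl⟩, assume_iff.mpr
                    ⟨by intro c hc'; simp only [List.cons_append, List.head?_cons,
                        Option.mem_def, Option.some.injEq] at hc'; subst hc';
                        exact ⟨hsinv, hb⟩, henv1'⟩⟩
                obtain ⟨hg1', hl1'⟩ := commit_iff.mp hcom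
                have ht2inv : t2 ∈ inv :=
                  hl1' (EventSys.trig bot, t2) (by rw [List.getLast?_append_of_ne_nil _ (by simp)]; simp) rfl
                rw [List.isChain_append] at hg1'
                obtain ⟨hg1, -, hg1b⟩ := hg1'
                have hguarpt : (p.2, t2) ∈ guar :=
                  hg1b p hp (EventSys.trig bot, t2) (by simp) ⟨δ', hps⟩
                have hlen2 : cl2.length ≤ n := by
                  have hle := congrArg List.length heq
                  simp only [liftSeq, List.length_cons, List.length_append,
                    List.length_map] at hle
                  simp only [List.length_cons] at hlen
                  omega
                obtain ⟨hg2, hl2⟩ := IH cl2 hlen2 hc2 t2 hh2 ht2inv hB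
                constructor
                · rw [heq, ← List.singleton_append, List.isChain_append, List.isChain_append]
                  refine ⟨List.isChain_singleton _, ⟨chain_guar_lift hg1, hg2, ?_⟩, ?_⟩
                  · -- boundary between the lifted part and the new iteration
                    intro x hx y hy
                    rw [Option.mem_def, liftSeq, List.getLast?_map, hp] at hx
                    simp only [Option.map_some, Option.some.injEq] at hx
                    subst hx
                    rw [Option.mem_def, hh2, Option.some.injEq] at hy
                    subst hy
                    exact fun _ => hguarpt
                  · -- boundary between the initial iter configuration and the lifted part
                    intro x hx y hy
                    simp only [List.getLast?_singleton, Option.mem_def, Option.some.injEq] at hx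
                    subst hx
                    simp only [liftSeq, List.map_cons, List.cons_append, List.head?_cons,
                      Option.mem_def, Option.some.injEq] at hy
                    subst hy
                    exact fun _ => h3 rfl
                · rw [heq, getLast?_cons' (by simp [liftSeq]),
                    List.getLast?_append_of_ne_nil _ (ne_nil_of_head? hh2)]
                  exact hl2

end Aux
end PiCore

open PiCore in
/-- **Soundness of the RG-Iter rule.** -/
theorem rg_iter_sound
    {Lbl Prog St Env : Type} (K : Type)
    (ptran : Env → Prog × St → Prog × St → Prop) (bot : Prog)
    (hbot : ∀ (Γ : Env) (s : St) (c : Prog × St), ¬ ptran Γ (bot, s) c)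
    (hneq : ∀ (Γ : Env) (P : Prog) (s t : St), ¬ ptran Γ (P, s) (P, t))
    (Γ : Env) (b : Set St) (S : EventSys Lbl Prog St)
    (inv : Set St) (rely guar : Set (St × St)) (post : Set St)
    (h1 : esValid K ptran bot Γ S (inv ∩ b) rely guar inv)
    (h2 : inv ∩ bᶜ ⊆ post)
    (h3 : IdRel St ⊆ guar)
    (h4 : stable inv rely)
    (h5 : stable post rely) :
    esValid K ptran bot Γ (EventSys.iter b S) inv rely guar post := by
  intro s cl hcl
  obtain ⟨⟨hc, hh⟩, hass⟩ := hcl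
  obtain ⟨hpre, henv⟩ := Aux.assume_iff.mp hass
  have hsinv : s ∈ inv := hpre _ (Option.mem_def.mpr hh)
  obtain ⟨hg, hl⟩ :=
    Aux.iter_main hbot hneq h1 h2 h3 h4 h5 cl.length cl le_rfl hc s hh hsinv henv
  exact Aux.commit_iff.mpr ⟨hg, hl⟩
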